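/- Let r ≥ 2 and 1 ≤ s ≤ r. For z ∈ ℂʳ define w ∈ ℂʳ by w₁ = z₁ − (1/2)·Σ_{j=s+1}^r z_j², w_k = exp(z_k) for 2 ≤ k ≤ s, and w_j = z_j for s < j ≤ r. Then w₁ + conj(w₁) = Σ_{k=2}^r |w_k|² holds if and only if 2 Re z₁ = Σ_{k=2}^s exp(2 Re z_k) + 2·Σ_{j=s+1}^r (Re z_j)². In particular the preimage of the quadric Q under the map z ↦ w is a tube: its membership condition depends only on the real parts of the coordinates of z. -/
import Mathlib


/-- Let `r ≥ 2` and `1 ≤ s ≤ r`. For `z ∈ ℂʳ` set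
`w₁ = z₁ − ½ Σ_{j>s} z_j²`, `w_k = exp z_k` for `2 ≤ k ≤ s`, `w_j = z_j` for
`j > s`. Then `w ∈ Q` iff `2 Re z₁ = Σ_{2≤k≤s} exp(2 Re z_k) + 2 Σ_{j>s} (Re z_j)²`;
in particular the preimage of `Q` under `z ↦ w` only depends on the real parts of
the coordinates of `z` (it is a tube). -/
theorem stmt_10 {r : ℕ} (hr : 2 ≤ r) (s : ℕ) (hs1 : 1 ≤ s) (hsr : s ≤ r) :
    let i0 : Fin r := ⟨0, by omega⟩
    let Q : Set (Fin r → ℂ) := {w | w i0 + (starRingEnd ℂ) (w i0) =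
      ∑ k ∈ Finset.univ.filter (fun k : Fin r => k ≠ i0), (Complex.normSq (w k) : ℂ)}
    let Φ : (Fin r → ℂ) → (Fin r → ℂ) := fun z k =>
      if k = i0 then
        z i0 - (1 / 2 : ℂ) *
          ∑ j ∈ Finset.univ.filter (fun j : Fin r => s ≤ (j : ℕ)), (z j) ^ 2
      else if (k : ℕ) < s then Complex.exp (z k) else z k
    (∀ z : Fin r → ℂ,
      (Φ z ∈ Q ↔
        2 * (z i0).re =
          (∑ k ∈ Finset.univ.filter (fun k : Fin r => 1 ≤ (k : ℕ) ∧ (k : ℕ) < s),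
            Real.exp (2 * (z k).re)) +
          2 * ∑ j ∈ Finset.univ.filter (fun j : Fin r => s ≤ (j : ℕ)), ((z j).re) ^ 2)) ∧
    (∀ z : Fin r → ℂ, ∀ y : Fin r → ℝ,
      (Φ z ∈ Q ↔ Φ (fun k => z k + (y k : ℂ) * Complex.I) ∈ Q)) := by
  intro i0 Q Φ
  have key : ∀ z : Fin r → ℂ,
      (Φ z ∈ Q ↔
        2 * (z i0).re =
          (∑ k ∈ Finset.univ.filter (fun k : Fin r => 1 ≤ (k : ℕ) ∧ (k : ℕ) < s),
            Real.exp (2 * (z k).re)) +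
          2 * ∑ j ∈ Finset.univ.filter (fun j : Fin r => s ≤ (j : ℕ)), ((z j).re) ^ 2) := by
    intro z
    have hΦ0 : Φ z i0 = z i0 - (1 / 2 : ℂ) *
        ∑ j ∈ Finset.univ.filter (fun j : Fin r => s ≤ (j : ℕ)), (z j) ^ 2 := by
      simp [Φ]
    have hΦk : ∀ k : Fin r, k ≠ i0 →
        Φ z k = if (k : ℕ) < s then Complex.exp (z k) else z k := by
      intro k hk; simp [Φ, hk]
    -- left side
    have hA : Φ z i0 + (starRingEnd ℂ) (Φ z i0)
        = ((2 * (z i0).re - ∑ j ∈ Finset.univ.filter (fun j : Fin r => s ≤ (j : ℕ)),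
            ((z j).re ^ 2 - (z j).im ^ 2) : ℝ) : ℂ) := by
      rw [Complex.add_conj, hΦ0]
      congr 1
      have hsum : (∑ j ∈ Finset.univ.filter (fun j : Fin r => s ≤ (j : ℕ)),
          (z j) ^ 2).re
          = ∑ j ∈ Finset.univ.filter (fun j : Fin r => s ≤ (j : ℕ)),
            ((z j).re ^ 2 - (z j).im ^ 2) := by
        rw [Complex.re_sum]
        refine Finset.sum_congr rfl fun j _ => ?_
        rw [sq, Complex.mul_re]; ring
      rw [Complex.sub_re,
        show ((1:ℂ)/2) = ((1/2 : ℝ) : ℂ) by norm_num, Complex.re_ofReal_mul,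
        hsum]
      ring
    -- right side, real version
    have hBr : ∑ k ∈ Finset.univ.filter (fun k : Fin r => k ≠ i0),
          Complex.normSq (Φ z k)
        = (∑ k ∈ Finset.univ.filter (fun k : Fin r => 1 ≤ (k : ℕ) ∧ (k : ℕ) < s),
            Real.exp (2 * (z k).re))
          + ∑ j ∈ Finset.univ.filter (fun j : Fin r => s ≤ (j : ℕ)),
            ((z j).re ^ 2 + (z j).im ^ 2) := by
      rw [← Finset.sum_filter_add_sum_filter_not
        (Finset.univ.filter (fun k : Fin r => k ≠ i0)) (fun k => (k : ℕ) < s)]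
      congr 1
      · rw [Finset.filter_filter]
        refine Finset.sum_congr ?_ ?_
        · apply Finset.filter_congr
          intro k _
          simp only [ne_eq, Fin.ext_iff, i0]
          constructor
          · rintro ⟨h1, h2⟩; exact ⟨by omega, h2⟩
          · rintro ⟨h1, h2⟩; exact ⟨by omega, h2⟩
        · intro k hk
          simp only [Finset.mem_filter] at hk
          rw [hΦk k (by simp only [ne_eq, Fin.ext_iff, i0]; omega),
            if_pos hk.2.2, Complex.normSq_eq_norm_sq, Complex.norm_exp]
          rw [two_mul, Real.exp_add, sq]
      · rw [Finset.filter_filter]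
        refine Finset.sum_congr ?_ ?_
        · apply Finset.filter_congr
          intro k _
          simp only [ne_eq, Fin.ext_iff, i0]
          omega
        · intro k hk
          simp only [Finset.mem_filter, not_lt] at hk
          rw [hΦk k (by simp only [ne_eq, Fin.ext_iff, i0]; omega),
            if_neg (by omega), Complex.normSq_apply]
          ring
    have hB : ∑ k ∈ Finset.univ.filter (fun k : Fin r => k ≠ i0),
          ((Complex.normSq (Φ z k) : ℝ) : ℂ)
        = (((∑ k ∈ Finset.univ.filter (fun k : Fin r => 1 ≤ (k : ℕ) ∧ (k : ℕ) < s),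
            Real.exp (2 * (z k).re))
          + ∑ j ∈ Finset.univ.filter (fun j : Fin r => s ≤ (j : ℕ)),
            ((z j).re ^ 2 + (z j).im ^ 2) : ℝ) : ℂ) := by
      rw [← Complex.ofReal_sum, hBr]
    show Φ z i0 + (starRingEnd ℂ) (Φ z i0) = _ ↔ _
    rw [hA, hB, Complex.ofReal_inj, Finset.sum_sub_distrib, Finset.sum_add_distrib]
    constructor <;> intro h <;> linarith
  refine ⟨key, fun z y => (key z).trans (Iff.trans ?_ (key _).symm)⟩
  have h1 : ∀ k : Fin r, (z k + (y k : ℂ) * Complex.I).re = (z k).re := by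
    intro k
    simp [Complex.add_re, Complex.mul_re]
  simp only [h1]
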